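/- Let f(x) = a₀x^d + C(d,1)a₁x^{d−1} + ... + C(d,d−1)a_{d−1}x + a_d over ℂ, d ≥ 3, a₀ ≠ 0. Set D₁ = a₀a₂ − a₁², D₂ = a₀a₃ − a₁a₂, D₃ = a₁a₃ − a₂². Assume the Hankel matrix with rows (aᵢ, a_{i+1}, a_{i+2}) for 0 ≤ i ≤ d−2 has rank 2, D₁ ≠ 0, and D₂² ≠ 4D₁D₃. Let λ₁ ≠ λ₂ be the roots of λ² − D₂λ + D₁D₃ = 0. Then f(x) = ((λ₂a₀ − D₁a₁)/(λ₂ − λ₁))·(x + λ₁/D₁)^d + ((λ₁a₀ − D₁a₁)/(λ₁ − λ₂))·(x + λ₂/D₁)^d, and for any δ with δ^d = (λ₂a₀ − D₁a₁)/(λ₁a₀ − D₁a₁) and any d-th root of unity ζ with δζ ≠ 1, x = (δζλ₁ − λ₂)/(D₁(1 − δζ)) is a root of f. -/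

import Mathlib

theorem stmt17 (d : ℕ) (hd : 3 ≤ d) (a : ℕ → ℂ) (ha₀ : a 0 ≠ 0)
    (D₁ D₂ D₃ : ℂ) (hD₁ : D₁ = a 0 * a 2 - (a 1)^2) (hD₂ : D₂ = a 0 * a 3 - a 1 * a 2)
    (hD₃ : D₃ = a 1 * a 3 - (a 2)^2)
    (hrank : (Matrix.of fun (i : Fin (d-1)) (j : Fin 3) => a ((i : ℕ) + (j : ℕ))).rank = 2)
    (hD₁ne : D₁ ≠ 0) (hdisc : D₂^2 ≠ 4*D₁*D₃)
    (l₁ l₂ : ℂ) (hroot₁ : l₁^2 - D₂*l₁ + D₁*D₃ = 0)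
    (hroot₂ : l₂^2 - D₂*l₂ + D₁*D₃ = 0) (hne : l₁ ≠ l₂) :
    (∀ x : ℂ,
      ∑ i ∈ Finset.range (d+1), (d.choose i : ℂ) * a i * x^(d-i)
        = (l₂ * a 0 - D₁ * a 1)/(l₂ - l₁) * (x + l₁/D₁)^d
          + (l₁ * a 0 - D₁ * a 1)/(l₁ - l₂) * (x + l₂/D₁)^d) ∧
    ∀ δ ζ : ℂ, δ^d = (l₂ * a 0 - D₁ * a 1)/(l₁ * a 0 - D₁ * a 1) → ζ^d = 1 →
      δ*ζ ≠ 1 →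
      ∑ i ∈ Finset.range (d+1),
          (d.choose i : ℂ) * a i * ((δ*ζ*l₁ - l₂)/(D₁*(1 - δ*ζ)))^(d-i) = 0 := by
  have hnesub : l₂ - l₁ ≠ 0 := sub_ne_zero.mpr (Ne.symm hne)
  have hnesub' : l₁ - l₂ ≠ 0 := sub_ne_zero.mpr hne
  set M : Matrix (Fin (d-1)) (Fin 3) ℂ :=
    Matrix.of fun (i : Fin (d-1)) (j : Fin 3) => a ((i : ℕ) + (j : ℕ)) with hM
  -- extract kernel vector
  obtain ⟨c, hc0, hcker⟩ : ∃ c : Fin 3 → ℂ, c ≠ 0 ∧ M.mulVec c = 0 := by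
    have hrn := LinearMap.finrank_range_add_finrank_ker M.mulVecLin
    rw [Module.finrank_pi, Fintype.card_fin] at hrn
    have hrk : Module.finrank ℂ (LinearMap.range M.mulVecLin) = 2 := hrank
    have hker1 : Module.finrank ℂ (LinearMap.ker M.mulVecLin) = 1 := by omega
    have hne' : LinearMap.ker M.mulVecLin ≠ ⊥ := by
      intro h
      rw [h] at hker1
      simp [finrank_bot] at hker1
    obtain ⟨c, hc, hc0⟩ := Submodule.exists_mem_ne_zero_of_ne_bot hne'
    exact ⟨c, hc0, hc⟩
  have hrec : ∀ i : ℕ, i < d - 1 →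
      c 0 * a i + c 1 * a (i+1) + c 2 * a (i+2) = 0 := by
    intro i hi
    have := congrFun hcker ⟨i, hi⟩
    simpa [M, Matrix.mulVec, dotProduct, Fin.sum_univ_three, mul_comm] using this
  have h0 := hrec 0 (by omega)
  have h1 := hrec 1 (by omega)
  norm_num at h0 h1
  have hc2 : c 2 ≠ 0 := by
    intro hc2
    rw [hc2] at h0 h1
    have hc1 : c 1 = 0 := by
      have : c 1 * D₁ = 0 := by rw [hD₁]; linear_combination a 0 * h1 - a 1 * h0
      exact (mul_eq_zero.mp this).resolve_right hD₁ne
    have hc0' : c 0 = 0 := by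
      rw [hc1] at h0
      have : c 0 * a 0 = 0 := by linear_combination h0
      exact (mul_eq_zero.mp this).resolve_right ha₀
    apply hc0
    funext j
    fin_cases j <;> simp [hc0', hc1, hc2]
  have hcD2 : c 2 * D₂ = -(c 1) * D₁ := by
    rw [hD₁, hD₂]; linear_combination a 0 * h1 - a 1 * h0
  have hcD3 : c 2 * D₃ = c 0 * D₁ := by
    rw [hD₁, hD₃]; linear_combination a 1 * h1 - a 2 * h0
  have arecD : ∀ i : ℕ, i < d - 1 → D₁ * a (i+2) = D₂ * a (i+1) - D₃ * a i := by
    intro i hi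
    have h := hrec i hi
    apply mul_left_cancel₀ hc2
    linear_combination D₁ * h - a (i+1) * hcD2 + a i * hcD3
  obtain ⟨μ₁, hμd1⟩ : ∃ x : ℂ, l₁ / D₁ = x := ⟨_, rfl⟩
  obtain ⟨μ₂, hμd2⟩ : ∃ x : ℂ, l₂ / D₁ = x := ⟨_, rfl⟩
  have hl1 : D₁ * μ₁ = l₁ := by rw [← hμd1]; field_simp
  have hl2 : D₁ * μ₂ = l₂ := by rw [← hμd2]; field_simp
  have hchar₁ : D₁ * μ₁^2 = D₂ * μ₁ - D₃ := by
    apply mul_left_cancel₀ hD₁ne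
    linear_combination (D₁*μ₁ + l₁)*hl1 - D₂*hl1 + hroot₁
  have hchar₂ : D₁ * μ₂^2 = D₂ * μ₂ - D₃ := by
    apply mul_left_cancel₀ hD₁ne
    linear_combination (D₁*μ₂ + l₂)*hl2 - D₂*hl2 + hroot₂
  obtain ⟨A, hAd⟩ : ∃ x : ℂ, (l₂ * a 0 - D₁ * a 1)/(l₂ - l₁) = x := ⟨_, rfl⟩
  obtain ⟨B, hBd⟩ : ∃ x : ℂ, (l₁ * a 0 - D₁ * a 1)/(l₁ - l₂) = x := ⟨_, rfl⟩
  have hA2 : (l₂ - l₁) * A = l₂ * a 0 - D₁ * a 1 := by rw [← hAd]; field_simp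
  have hB2 : (l₁ - l₂) * B = l₁ * a 0 - D₁ * a 1 := by rw [← hBd]; field_simp
  have base0 : a 0 = A * μ₁^0 + B * μ₂^0 := by
    simp only [pow_zero, mul_one]
    apply mul_left_cancel₀ hnesub
    linear_combination hB2 - hA2
  have base1 : a 1 = A * μ₁^1 + B * μ₂^1 := by
    simp only [pow_one]
    apply mul_left_cancel₀ (mul_ne_zero hD₁ne hnesub)
    linear_combination (-(l₂-l₁)*A)*hl1 - l₁*hA2 + (-(l₂-l₁)*B)*hl2 + l₂*hB2
  have hform : ∀ i : ℕ, i ≤ d → a i = A * μ₁^i + B * μ₂^i := by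
    intro i
    induction i using Nat.strong_induction_on with
    | _ i ih =>
      match i with
      | 0 => intro _; exact base0
      | 1 => intro _; exact base1
      | (n+2) =>
        intro hle
        have hr := arecD n (by omega)
        have ih0 := ih n (by omega) (by omega)
        have ih1 := ih (n+1) (by omega) (by omega)
        apply mul_left_cancel₀ hD₁ne
        linear_combination hr + D₂*ih1 - D₃*ih0 - A*μ₁^n*hchar₁ - B*μ₂^n*hchar₂
  have part1 : ∀ x : ℂ,
      ∑ i ∈ Finset.range (d+1), (d.choose i : ℂ) * a i * x^(d-i)
        = A * (x + μ₁)^d + B * (x + μ₂)^d := by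
    intro x
    have key : ∀ μ : ℂ, (x + μ)^d
        = ∑ i ∈ Finset.range (d+1), μ^i * x^(d-i) * (d.choose i : ℂ) := by
      intro μ
      rw [add_comm, add_pow]
    rw [key, key, Finset.mul_sum, Finset.mul_sum, ← Finset.sum_add_distrib]
    apply Finset.sum_congr rfl
    intro i hi
    rw [hform i (Nat.lt_succ_iff.mp (Finset.mem_range.mp hi))]
    ring
  constructor
  · simp only [hAd, hBd, hμd1, hμd2]
    exact part1
  · intro δ ζ hδ hζ hδζ
    have hNB : l₁ * a 0 - D₁ * a 1 ≠ 0 := by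
      intro hNB
      have hB0 : B = 0 := by rw [← hBd, hNB, zero_div]
      have hMfac : M = (Matrix.of fun (i : Fin (d-1)) (_ : Fin 1) => A * μ₁^(i:ℕ)) *
          (Matrix.of fun (_ : Fin 1) (j : Fin 3) => μ₁^(j:ℕ)) := by
        ext i j
        have hij : (i:ℕ) + (j:ℕ) ≤ d := by
          have := i.isLt; have := j.isLt; omega
        simp only [M, Matrix.mul_apply, Matrix.of_apply, Fin.sum_univ_one,
          hform _ hij, hB0, zero_mul, add_zero, pow_add]
        ring
      have hle1 : M.rank ≤ 1 := by
        rw [hMfac]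
        calc ((Matrix.of fun (i : Fin (d-1)) (_ : Fin 1) => A * μ₁^(i:ℕ)) *
              (Matrix.of fun (_ : Fin 1) (j : Fin 3) => μ₁^(j:ℕ))).rank
            ≤ (Matrix.of fun (_ : Fin 1) (j : Fin 3) => μ₁^(j:ℕ)).rank :=
              Matrix.rank_mul_le_right _ _
          _ ≤ Fintype.card (Fin 1) := Matrix.rank_le_card_height _
          _ = 1 := Fintype.card_fin 1
      rw [hrank] at hle1
      omega
    have hone : 1 - δ*ζ ≠ 0 := by
      intro h
      exact hδζ (by linear_combination -h)
    set x₀ : ℂ := (δ*ζ*l₁ - l₂)/(D₁*(1 - δ*ζ)) with hx₀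
    set t : ℂ := (l₁ - l₂)/(D₁*(1 - δ*ζ)) with ht
    have hx1 : x₀ + μ₁ = t := by
      rw [hx₀, ht, ← hμd1]
      field_simp
      ring
    have hx2 : x₀ + μ₂ = (δ*ζ) * t := by
      rw [hx₀, ht, ← hμd2]
      field_simp
      ring
    have hwd : (δ*ζ)^d = (l₂ * a 0 - D₁ * a 1)/(l₁ * a 0 - D₁ * a 1) := by
      rw [mul_pow, hδ, hζ, mul_one]
    have hAB : A + B * ((l₂ * a 0 - D₁ * a 1)/(l₁ * a 0 - D₁ * a 1)) = 0 := by
      rw [← hAd, ← hBd]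
      rw [div_mul_div_comm, div_add_div _ _ hnesub (mul_ne_zero hnesub' hNB), div_eq_zero_iff]
      left; ring
    rw [part1 x₀, hx1, hx2, mul_pow, hwd]
    linear_combination t^d * hAB
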